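/- The map f from trees on ω to binary trees given by the encoding (n₁,...,n_k) ↦ r^{n₁} l ⋯ r^{n_k} l is continuous: the label of any binary-tree node at depth n in f(T) is determined by the membership in T of finitely many sequences (those in {0,...,n}^{≤ n}). -/

import Mathlib

open Classical

/-- Infinite binary trees over {a,b}; `true` = a, `false` = b. -/
abbrev Tree2 := List (Fin 2) → Bool

/-- The length-`n` prefix of a branch. -/
def pre (β : ℕ → Fin 2) (n : ℕ) : List (Fin 2) := List.ofFn (fun i : Fin n => β i)

/-- A branch is good: all its finite prefixes are labelled `a` and it turns left (0)
infinitely often. -/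
def Good (t : Tree2) (β : ℕ → Fin 2) : Prop :=
  (∀ n, t (pre β n) = true) ∧ (∀ m, ∃ n ≥ m, β n = 0)

/-- `β` is strictly to the left of `γ`. -/
def LeftOf (β γ : ℕ → Fin 2) : Prop :=
  ∃ n, (∀ i < n, β i = γ i) ∧ β n = 0 ∧ γ n = 1

/-- A branch passes through a node. -/
def Through (γ : ℕ → Fin 2) (v : List (Fin 2)) : Prop := pre γ v.length = v

/-- The encoding (n₁,…,n_k) ↦ r^{n₁} l r^{n₂} l ⋯ r^{n_k} l, with r = 1 and l = 0. -/
def enc : List ℕ → List (Fin 2)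
  | [] => []
  | n :: u => List.replicate n (1 : Fin 2) ++ (0 : Fin 2) :: enc u

/-- The reduction: a node of `fT T` is labelled `a` iff it is a prefix of some word
`enc u ++ r^m` with `u ∈ T`. -/
noncomputable def fT (T : List ℕ → Bool) : Tree2 := fun v =>
  if ∃ u m, T u = true ∧ v <+: (enc u ++ List.replicate m (1 : Fin 2)) then true else false

/-- The space of trees on ω: prefix-closed subsets of `List ℕ` (as characteristic
functions), topologized as a subspace of `2 ^ (List ℕ)`. -/
abbrev TrN := {T : List ℕ → Bool // ∀ u v : List ℕ, u <+: v → T v = true → T u = true}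

/-- Ill-founded trees: those with an infinite branch. -/
def IF : Set TrN :=
  {T | ∃ x : ℕ → ℕ, ∀ k : ℕ, T.1 (List.ofFn fun i : Fin k => x i) = true}

lemma rep_prefix {n m : ℕ} (h : n ≤ m) :
    (List.replicate n (1 : Fin 2)) <+: List.replicate m 1 :=
  ⟨List.replicate (m - n) 1, by rw [← List.replicate_add]; congr 1; omega⟩

lemma ones_of_prefix {v : List (Fin 2)} {m : ℕ} (h : v <+: List.replicate m 1) :
    v = List.replicate v.length 1 :=
  List.eq_replicate_iff.mpr ⟨rfl, fun b hb => List.eq_of_mem_replicate (h.subset hb)⟩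

lemma prefix_append_cases {α : Type*} {v x y : List α} (h : v <+: x ++ y) :
    v <+: x ∨ ∃ v', v = x ++ v' ∧ v' <+: y := by
  rcases le_or_gt v.length x.length with hl | hl
  · exact Or.inl (List.prefix_of_prefix_length_le h (x.prefix_append y) hl)
  · right
    obtain ⟨v', rfl⟩ := List.prefix_of_prefix_length_le (x.prefix_append y) h hl.le
    exact ⟨v', rfl, (List.prefix_append_right_inj x).mp h⟩

lemma encA : ∀ (u : List ℕ) (m : ℕ) (v : List (Fin 2)),
    v <+: enc u ++ List.replicate m 1 →
    (v <+: enc (u.take (v.count 0)) ++ List.replicate v.length 1) ∧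
      ∀ i ∈ u.take (v.count 0), i ≤ v.length := by
  intro u
  induction u with
  | nil =>
    intro m v h
    simp only [enc, List.nil_append] at h
    have hv := ones_of_prefix h
    constructor
    · simp only [List.take_nil, enc, List.nil_append]
      exact ⟨[], by simp [← hv]⟩
    · simp
  | cons a u ih =>
    intro m v h
    have h' : v <+: List.replicate a (1 : Fin 2) ++ ((0 : Fin 2) :: (enc u ++ List.replicate m 1)) := by
      simpa [enc] using h
    rcases prefix_append_cases h' with hv | ⟨v₀, rfl, hv₀⟩
    · -- v is all ones, count 0 v = 0
      have hv1 := ones_of_prefix hv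
      have hc : v.count 0 = 0 := by
        rw [hv1, List.count_replicate]; simp
      rw [hc]
      refine ⟨⟨[], by simp [enc, ← hv1]⟩, by simp⟩
    · cases v₀ with
      | nil =>
        have hc : (List.replicate a (1 : Fin 2) ++ []).count 0 = 0 := by
          simp [List.count_replicate]
        rw [hc]
        refine ⟨⟨[], ?_⟩, by simp⟩
        simp [enc]
      | cons c v' =>
        obtain ⟨t, ht⟩ := hv₀
        have hc0 : c = 0 := by
          have := congrArg (fun l => l.head?) ht
          simpa using this
        subst hc0
        have hv' : v' <+: enc u ++ List.replicate m 1 := by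
          refine ⟨t, ?_⟩
          have := ht
          simpa using this
        have hcount : (List.replicate a (1 : Fin 2) ++ (0 : Fin 2) :: v').count 0 = v'.count 0 + 1 := by
          simp [List.count_replicate, List.count_cons]
        obtain ⟨ihp, ihb⟩ := ih m v' hv'
        have hlen : v'.length ≤ (List.replicate a (1 : Fin 2) ++ (0 : Fin 2) :: v').length := by
          simp; omega
        rw [hcount]
        constructor
        · simp only [List.take_succ_cons, enc, List.append_assoc, List.cons_append]
          refine (List.prefix_append_right_inj _).mpr ?_
          rw [List.cons_prefix_cons]
          exact ⟨rfl, ihp.trans ((List.prefix_append_right_inj _).mpr (rep_prefix (by simp; omega)))⟩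
        · intro i hi
          simp only [List.take_succ_cons, List.mem_cons] at hi
          rcases hi with rfl | hi
          · simp
          · exact le_trans (ihb i hi) hlen

lemma finite_lists : ∀ k m : ℕ, {l : List ℕ | l.length ≤ k ∧ ∀ i ∈ l, i ≤ m}.Finite := by
  intro k
  induction k with
  | zero =>
    intro m
    refine Set.Finite.subset (Set.finite_singleton ([] : List ℕ)) ?_
    rintro l ⟨h1, -⟩
    simpa using List.length_eq_zero_iff.mp (Nat.le_zero.mp h1)
  | succ k ih =>
    intro m
    refine Set.Finite.subset
      ((Set.finite_singleton ([] : List ℕ)).union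
        (((Set.finite_Iic m).prod (ih m)).image (fun p : ℕ × List ℕ => p.1 :: p.2))) ?_
    rintro l ⟨h1, h2⟩
    cases l with
    | nil => exact Or.inl rfl
    | cons a t =>
      refine Or.inr ⟨(a, t), ⟨h2 a List.mem_cons_self,
        ⟨by simpa using h1, fun i hi => h2 i (List.mem_cons_of_mem a hi)⟩⟩, rfl⟩

def Fv (v : List (Fin 2)) : Set (List ℕ) :=
  {u | u.length ≤ v.length ∧ (∀ i ∈ u, i ≤ v.length) ∧
    v <+: enc u ++ List.replicate v.length 1}

lemma Fv_finite (v : List (Fin 2)) : (Fv v).Finite :=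
  (finite_lists v.length v.length).subset (fun _ h => ⟨h.1, h.2.1⟩)

lemma fT_eq (T : TrN) (v : List (Fin 2)) :
    fT T.1 v = true ↔ ∃ u ∈ Fv v, T.1 u = true := by
  constructor
  · intro h
    have hP : ∃ u m, T.1 u = true ∧ v <+: (enc u ++ List.replicate m (1 : Fin 2)) := by
      by_contra hn
      unfold fT at h
      rw [if_neg hn] at h
      exact absurd h (by simp)
    obtain ⟨u, m, hu, hp⟩ := hP
    obtain ⟨hpre, hent⟩ := encA u m v hp
    exact ⟨u.take (v.count 0),
      ⟨le_trans (List.length_take_le _ _) List.count_le_length, hent, hpre⟩,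
      T.2 _ u (List.take_prefix _ _) hu⟩
  · rintro ⟨u, hu, hT⟩
    have hP : ∃ u m, T.1 u = true ∧ v <+: (enc u ++ List.replicate m (1 : Fin 2)) :=
      ⟨u, v.length, hT, hu.2.2⟩
    unfold fT
    rw [if_pos hP]

/-- The encoding map is continuous on the space of prefix-closed trees on ω. -/
theorem fT_continuous : Continuous (fun T : TrN => fT T.1) := by
  refine continuous_pi fun v => ?_
  rw [continuous_discrete_rng]
  have hev : ∀ (u : List ℕ) (c : Bool), IsOpen {T : TrN | T.1 u = c} := by
    intro u c
    have heq : {T : TrN | T.1 u = c} = (fun T : TrN => T.1 u) ⁻¹' {c} := rfl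
    rw [heq]
    exact (isOpen_discrete _).preimage ((continuous_apply u).comp continuous_subtype_val)
  intro b
  cases b with
  | false =>
    have he : (fun T : TrN => fT T.1 v) ⁻¹' {false} = ⋂ u ∈ Fv v, {T : TrN | T.1 u = false} := by
      ext T
      simp only [Set.mem_preimage, Set.mem_singleton_iff, Set.mem_iInter, Set.mem_setOf_eq]
      constructor
      · intro h u hu
        cases h' : T.1 u with
        | false => rfl
        | true =>
          have := (fT_eq T v).mpr ⟨u, hu, h'⟩
          rw [h] at this; exact absurd this (by simp)
      · intro h
        cases h' : fT T.1 v with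
        | false => rfl
        | true =>
          obtain ⟨u, hu, hT⟩ := (fT_eq T v).mp h'
          rw [h u hu] at hT; exact absurd hT (by simp)
    rw [he]
    exact (Fv_finite v).isOpen_biInter fun u _ => hev u false
  | true =>
    have he : (fun T : TrN => fT T.1 v) ⁻¹' {true} = ⋃ u ∈ Fv v, {T : TrN | T.1 u = true} := by
      ext T
      simp only [Set.mem_preimage, Set.mem_singleton_iff, Set.mem_iUnion, Set.mem_setOf_eq]
      rw [fT_eq T v]
      simp
    rw [he]
    exact isOpen_biUnion fun u _ => hev u true
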